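/- arXiv:1106.2108 — 3 statements merged into one kernel-verified Lean document; each statement's English description precedes it below -/
import Mathlib

section
/- Let f be 1-periodic and C^1 with modulus of continuity ω(f',δ) of f'. Then there exists a constant C ≤ 1 such that for every j ≥ 1, |R_j(f)| ≤ C · ω(f', 1/j)/(2j), where R_j(f) = (1/j) Σ_{k=0}^{j-1} f(k/j) - ∫_0^1 f(x) dx. -/
open MeasureTheory Finset

/-- Trapezoidal-rule error `R_j(f)` for a 1-periodic function. -/
noncomputable def trapError (f : ℝ → ℝ) (j : ℕ) : ℝ :=
  (1 / (j : ℝ)) * ∑ k ∈ Finset.range j, f ((k : ℝ) / (j : ℝ)) - ∫ x in (0:ℝ)..1, f x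

/-- `ω` is the modulus of continuity of `g`: `ω δ = sup {|g(x+h)-g(x)| : |h| ≤ δ}`. -/
def IsModulusOf (g : ℝ → ℝ) (ω : ℝ → ℝ) : Prop :=
  ∀ δ : ℝ, 0 ≤ δ → IsLUB {y : ℝ | ∃ x h : ℝ, |h| ≤ δ ∧ y = |g (x + h) - g x|} (ω δ)

theorem stmt_4 (f : ℝ → ℝ) (hper : Function.Periodic f 1)
    (hf : ContDiff ℝ 1 f) (ω : ℝ → ℝ) (hω : IsModulusOf (deriv f) ω) :
    ∃ C : ℝ, C ≤ 1 ∧ ∀ j : ℕ, 1 ≤ j →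
      |trapError f j| ≤ C * ω (1 / (j : ℝ)) / (2 * (j : ℝ)) := by
  classical
  refine ⟨1, le_rfl, fun j hj => ?_⟩
  have hJ0 : (0:ℝ) < (j:ℝ) := by exact_mod_cast hj
  set J : ℝ := (j : ℝ) with hJdef
  set g : ℝ → ℝ := deriv f with hgdef
  have hgc : Continuous g := hf.continuous_deriv le_rfl
  have hfc : Continuous f := hf.continuous
  have hfd : ∀ x : ℝ, HasDerivAt f (g x) x := fun x =>
    (hf.differentiable one_ne_zero x).hasDerivAt
  set a : ℕ → ℝ := fun k => (k : ℝ) / J with hadef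
  have hak : ∀ k : ℕ, a (k+1) - a k = 1 / J := by
    intro k; simp only [hadef]; push_cast; field_simp; ring
  have hale : ∀ k : ℕ, a k ≤ a (k+1) := by
    intro k
    have h1 : (0:ℝ) < 1 / J := by positivity
    have := hak k; linarith
  set m : ℕ → ℝ := fun k => a (k+1) - 1/(2*J) with hmdef
  -- modulus facts
  have hub : ∀ x h : ℝ, |h| ≤ 1/J → |g (x + h) - g x| ≤ ω (1/J) :=
    fun x h hh => (hω (1/J) (by positivity)).1 ⟨x, h, hh, rfl⟩
  have hω0 : 0 ≤ ω (1/J) := by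
    have := hub 0 0 (by simp; positivity)
    simpa using this
  -- integration by parts on each subinterval
  have key : ∀ k : ℕ, (1/J) * f (a k) - (∫ x in a k..a (k+1), f x)
      = ∫ x in a k..a (k+1), g x * (x - a (k+1)) := by
    intro k
    have hparts := intervalIntegral.integral_deriv_mul_eq_sub
      (u := f) (v := fun x => x - a (k+1)) (u' := g) (v' := fun _ => 1) (a := a k)
      (b := a (k+1))
      (fun x _ => hfd x)
      (fun x _ => (hasDerivAt_id x).sub_const _)
      (hgc.intervalIntegrable _ _)
      intervalIntegrable_const
    have hsplit : (∫ x in a k..a (k+1), (g x * (x - a (k+1)) + f x * 1))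
        = (∫ x in a k..a (k+1), g x * (x - a (k+1))) + ∫ x in a k..a (k+1), f x := by
      rw [intervalIntegral.integral_add
        ((hgc.fun_mul (continuous_sub_right _)).intervalIntegrable _ _)
        ((hfc.fun_mul continuous_const).intervalIntegrable _ _)]
      simp
    rw [hsplit] at hparts
    simp only [sub_self, mul_zero, zero_sub] at hparts
    have h1 : a k - a (k+1) = -(1/J) := by have := hak k; linarith
    rw [h1] at hparts
    linarith
  -- total integral of f splits
  have hsplitf : (∫ x in (0:ℝ)..1, f x)
      = ∑ k ∈ Finset.range j, ∫ x in a k..a (k+1), f x := by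
    rw [intervalIntegral.sum_integral_adjacent_intervals
      (fun k _ => hfc.intervalIntegrable _ _)]
    have h0 : a 0 = 0 := by simp [hadef]
    have h1 : a j = 1 := by simp [hadef]; field_simp; exact hJdef.symm
    rw [h0, h1]
  -- trapError as sum of kernel integrals
  have hTE : trapError f j = ∑ k ∈ Finset.range j,
      ∫ x in a k..a (k+1), g x * (x - a (k+1)) := by
    rw [trapError, hsplitf, Finset.mul_sum, ← Finset.sum_sub_distrib]
    exact Finset.sum_congr rfl fun k _ => key k
  -- integral of derivative over period is zero
  have hg0 : (∫ x in (0:ℝ)..1, g x) = 0 := by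
    rw [hgdef, intervalIntegral.integral_deriv_eq_sub
      (fun x _ => hf.differentiable one_ne_zero x)
      (hgc.intervalIntegrable _ _)]
    have : f 1 = f 0 := by simpa using hper 0
    simp [this]
  have hgsum : ∑ k ∈ Finset.range j, ∫ x in a k..a (k+1), g x = 0 := by
    rw [intervalIntegral.sum_integral_adjacent_intervals
      (fun k _ => hgc.intervalIntegrable _ _)]
    have h0 : a 0 = 0 := by simp [hadef]
    have h1 : a j = 1 := by simp [hadef]; field_simp; exact hJdef.symm
    rw [h0, h1, hg0]
  -- shift kernel to midpoint
  have hTE2 : trapError f j = ∑ k ∈ Finset.range j,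
      ∫ x in a k..a (k+1), g x * (x - m k) := by
    have step : ∀ k : ℕ, (∫ x in a k..a (k+1), g x * (x - m k))
        = (∫ x in a k..a (k+1), g x * (x - a (k+1)))
          + (1/(2*J)) * ∫ x in a k..a (k+1), g x := by
      intro k
      rw [← intervalIntegral.integral_const_mul, ← intervalIntegral.integral_add
        ((hgc.fun_mul (continuous_sub_right _)).intervalIntegrable _ _)
        ((continuous_const.fun_mul hgc).intervalIntegrable _ _)]
      congr 1; funext x; simp only [hmdef]; ring
    rw [hTE]
    rw [Finset.sum_congr rfl fun k _ => step k, Finset.sum_add_distrib,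
      ← Finset.mul_sum, hgsum, mul_zero, add_zero]
  -- kernel has zero mean
  have hker : ∀ k : ℕ, (∫ x in a k..a (k+1), (x - m k)) = 0 := by
    intro k
    have hA : a k = a (k+1) - 1/J := by have := hak k; linarith
    rw [intervalIntegral.integral_sub intervalIntegral.intervalIntegrable_id
      intervalIntegrable_const, integral_id, intervalIntegral.integral_const]
    simp only [hmdef, smul_eq_mul]
    rw [hA]
    field_simp
    ring
  -- subtract g(m k)
  have hTE3 : trapError f j = ∑ k ∈ Finset.range j,
      ∫ x in a k..a (k+1), (g x - g (m k)) * (x - m k) := by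
    rw [hTE2]
    refine Finset.sum_congr rfl fun k _ => ?_
    have hz : (∫ x in a k..a (k+1), g (m k) * (x - m k)) = 0 := by
      rw [intervalIntegral.integral_const_mul, hker k, mul_zero]
    rw [← sub_zero (∫ x in a k..a (k+1), g x * (x - m k)), ← hz,
      ← intervalIntegral.integral_sub
        ((hgc.fun_mul (continuous_sub_right _)).intervalIntegrable _ _)
        ((continuous_const.fun_mul (continuous_sub_right _)).intervalIntegrable _ _)]
    congr 1; funext x; ring
  -- bound each term
  have hbound : ∀ k : ℕ, |∫ x in a k..a (k+1), (g x - g (m k)) * (x - m k)|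
      ≤ ω (1/J) * (1/(2*J)) * (1/J) := by
    intro k
    have hpt : ∀ x ∈ Set.uIoc (a k) (a (k+1)),
        ‖(g x - g (m k)) * (x - m k)‖ ≤ ω (1/J) * (1/(2*J)) := by
      intro x hx
      rw [Set.uIoc_of_le (hale k)] at hx
      have hd := hak k
      have h2 : (1:ℝ)/J = 2*(1/(2*J)) := by field_simp
      have hxm : |x - m k| ≤ 1/(2*J) := by
        rw [abs_le]
        constructor <;> simp only [hmdef]
        · linarith [hx.1]
        · linarith [hx.2]
      have hgx : |g x - g (m k)| ≤ ω (1/J) := by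
        have : |g (m k + (x - m k)) - g (m k)| ≤ ω (1/J) := by
          apply hub
          calc |x - m k| ≤ 1/(2*J) := hxm
            _ ≤ 1/J := by rw [div_le_div_iff₀ (by positivity) hJ0]; nlinarith
        simpa using this
      rw [Real.norm_eq_abs, abs_mul]
      exact mul_le_mul hgx hxm (abs_nonneg _) hω0
    have := intervalIntegral.norm_integral_le_of_norm_le_const hpt
    rw [Real.norm_eq_abs] at this
    calc |∫ x in a k..a (k+1), (g x - g (m k)) * (x - m k)|
        ≤ ω (1/J) * (1/(2*J)) * |a (k+1) - a k| := this
      _ = ω (1/J) * (1/(2*J)) * (1/J) := by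
          rw [hak k, abs_of_pos (by positivity)]
  -- conclude
  have hfinal : |trapError f j| ≤ J * (ω (1/J) * (1/(2*J)) * (1/J)) := by
    rw [hTE3]
    calc |∑ k ∈ Finset.range j, ∫ x in a k..a (k+1), (g x - g (m k)) * (x - m k)|
        ≤ ∑ k ∈ Finset.range j, |∫ x in a k..a (k+1), (g x - g (m k)) * (x - m k)| :=
          Finset.abs_sum_le_sum_abs _ _
      _ ≤ ∑ _k ∈ Finset.range j, ω (1/J) * (1/(2*J)) * (1/J) :=
          Finset.sum_le_sum fun k _ => hbound k
      _ = J * (ω (1/J) * (1/(2*J)) * (1/J)) := by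
          rw [Finset.sum_const, Finset.card_range]; simp [hJdef]
  have : J * (ω (1/J) * (1/(2*J)) * (1/J)) = 1 * ω (1/J) / (2*J) := by
    field_simp
  linarith [hfinal, this.symm.le]
end

section
/- Fix θ > 0 and N ≥ 1, with J_N and K_N as in the Feller coupling (J_N = distance back from N to last success among ξ_1,…,ξ_N with ξ_1=1; K_N = distance to first success after N, for independent Bernoulli ξ_i with P[ξ_i=1] = θ/(θ+i-1)). Then for every j ≥ 1, P[J_N + K_N = j+1] ≤ θ/N. -/
open MeasureTheory ProbabilityTheory Finset Filter Topology

theorem stmt_14 {Ω : Type*} [MeasurableSpace Ω] (μ : Measure Ω) [IsProbabilityMeasure μ]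
    (θ : ℝ) (hθ : 0 < θ) (N : ℕ) (hN : 1 ≤ N)
    (ξ : ℕ → Ω → Bool) (hmeas : ∀ i, Measurable (ξ i))
    (hindep : iIndepFun ξ μ)
    (hdist : ∀ i : ℕ, 1 ≤ i → μ {ω | ξ i ω = true} = ENNReal.ofReal (θ / (θ + i - 1)))
    (J K : Ω → ℕ)
    (hJ : ∀ ω, J ω = sInf {j : ℕ | 1 ≤ j ∧ ξ (N - j + 1) ω = true})
    (hK : ∀ ω, K ω = sInf {j : ℕ | 1 ≤ j ∧ ξ (N + j) ω = true}) :
    ∀ j : ℕ, 1 ≤ j →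
      μ {ω | J ω + K ω = j + 1} ≤ ENNReal.ofReal (θ / N) := by
  intro j hj
  have hN1 : (1:ℝ) ≤ N := by exact_mod_cast hN
  -- basic real facts
  have hcast : ∀ i : ℕ, 1 ≤ i → (0:ℝ) < θ + i - 1 := by
    intro i hi
    have : (1:ℝ) ≤ i := by exact_mod_cast hi
    linarith
  have hple : ∀ i : ℕ, 1 ≤ i → θ / (θ + i - 1) ≤ 1 := by
    intro i hi
    rw [div_le_one (hcast i hi)]
    have : (1:ℝ) ≤ i := by exact_mod_cast hi
    linarith
  have hpnn : ∀ i : ℕ, 1 ≤ i → 0 ≤ θ / (θ + i - 1) := fun i hi =>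
    div_nonneg hθ.le (hcast i hi).le
  have htrue : ∀ i : ℕ, 1 ≤ i → μ (ξ i ⁻¹' {true}) = ENNReal.ofReal (θ / (θ + i - 1)) := by
    intro i hi
    rw [show ξ i ⁻¹' {true} = {ω | ξ i ω = true} from rfl]
    exact hdist i hi
  have hfalse : ∀ i : ℕ, 1 ≤ i →
      μ (ξ i ⁻¹' {false}) = ENNReal.ofReal (1 - θ / (θ + i - 1)) := by
    intro i hi
    have hc : ξ i ⁻¹' {false} = (ξ i ⁻¹' {true})ᶜ := by
      ext ω
      simp [Bool.not_eq_true]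
    rw [hc, measure_compl ((measurableSet_singleton _).preimage (hmeas i)) (measure_ne_top μ _),
      measure_univ, htrue i hi, ENNReal.ofReal_sub _ (hpnn i hi), ENNReal.ofReal_one]
  have hprod : ∀ (S : Finset ℕ) (b : ℕ → Bool),
      μ (⋂ i ∈ S, ξ i ⁻¹' {b i}) = ∏ i ∈ S, μ (ξ i ⁻¹' {b i}) := fun S b =>
    hindep.meas_biInter (fun i _ => ⟨{b i}, trivial, rfl⟩)
  -- Bad events
  have hBad1 : μ (ξ 1 ⁻¹' {false}) = 0 := by
    rw [hfalse 1 le_rfl]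
    have : θ + ((1:ℕ):ℝ) - 1 = θ := by push_cast; ring
    rw [this, div_self hθ.ne']
    simp
  set Bad2 : Set Ω := {ω | ∀ ℓ : ℕ, 1 ≤ ℓ → ξ (N + ℓ) ω = false} with hBad2def
  have hBad2 : μ Bad2 = 0 := by
    have key : ∀ M : ℕ, μ Bad2 ≤
        ENNReal.ofReal (Real.exp (-(θ / (θ + N)) * ∑ i ∈ Finset.range M, (1 / (i + 1) : ℝ))) := by
      intro M
      set S : Finset ℕ := (Finset.range M).image (fun ℓ => N + 1 + ℓ) with hS
      have hsub : Bad2 ⊆ ⋂ i ∈ S, ξ i ⁻¹' {false} := by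
        intro ω hω
        simp only [Set.mem_iInter]
        intro i hi
        simp only [hS, Finset.mem_image, Finset.mem_range] at hi
        obtain ⟨ℓ, _, rfl⟩ := hi
        have h := hω (1 + ℓ) (by omega)
        have he : N + (1 + ℓ) = N + 1 + ℓ := by omega
        rw [he] at h
        exact h
      have hNθ : (0:ℝ) < θ + N := by linarith
      calc μ Bad2 ≤ μ (⋂ i ∈ S, ξ i ⁻¹' {false}) := measure_mono hsub
        _ = ∏ i ∈ S, μ (ξ i ⁻¹' {false}) := hprod S (fun _ => false)
        _ = ∏ ℓ ∈ Finset.range M, μ (ξ (N + 1 + ℓ) ⁻¹' {false}) :=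
            Finset.prod_image (by intro a _ b _ h; simp only at h; omega)
        _ = ∏ ℓ ∈ Finset.range M, ENNReal.ofReal (1 - θ / (θ + (N + 1 + ℓ : ℕ) - 1)) := by
            refine Finset.prod_congr rfl fun ℓ hℓ => ?_
            exact hfalse (N + 1 + ℓ) (by omega)
        _ = ENNReal.ofReal (∏ ℓ ∈ Finset.range M, (1 - θ / (θ + (N + 1 + ℓ : ℕ) - 1))) := by
            rw [ENNReal.ofReal_prod_of_nonneg]
            intro ℓ hℓ
            have := hple (N + 1 + ℓ) (by omega)
            linarith
        _ ≤ ENNReal.ofReal (Real.exp (-(θ / (θ + N)) * ∑ i ∈ Finset.range M, (1 / (i + 1) : ℝ))) := by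
            apply ENNReal.ofReal_le_ofReal
            have step1 : ∏ ℓ ∈ Finset.range M, (1 - θ / (θ + (N + 1 + ℓ : ℕ) - 1))
                ≤ ∏ ℓ ∈ Finset.range M, Real.exp (-(θ / (θ + (N + 1 + ℓ : ℕ) - 1))) := by
              apply Finset.prod_le_prod
              · intro ℓ hℓ
                have := hple (N + 1 + ℓ) (by omega)
                linarith
              · intro ℓ hℓ
                have := Real.add_one_le_exp (-(θ / (θ + (N + 1 + ℓ : ℕ) - 1)))
                linarith
            have hterm : ∀ ℓ ∈ Finset.range M,
                (θ / (θ + N)) * (1 / (ℓ + 1) : ℝ) ≤ θ / (θ + (N + 1 + ℓ : ℕ) - 1) := by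
              intro ℓ hℓ
              have hl0 : (0:ℝ) ≤ ℓ := Nat.cast_nonneg ℓ
              have hc1 : (0:ℝ) < (θ + N) * (ℓ + 1) := by nlinarith
              have hc2 : (0:ℝ) < θ + (N + 1 + ℓ : ℕ) - 1 := hcast _ (by omega)
              rw [div_mul_div_comm, mul_one, div_le_div_iff₀ hc1 hc2]
              push_cast
              nlinarith [mul_nonneg (mul_nonneg hθ.le (by linarith : (0:ℝ) ≤ θ + N - 1)) hl0]
            have hchain : (θ / (θ + N)) * ∑ i ∈ Finset.range M, (1 / (i + 1) : ℝ)
                ≤ ∑ ℓ ∈ Finset.range M, θ / (θ + (N + 1 + ℓ : ℕ) - 1) := by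
              rw [Finset.mul_sum]
              exact Finset.sum_le_sum hterm
            calc ∏ ℓ ∈ Finset.range M, (1 - θ / (θ + (N + 1 + ℓ : ℕ) - 1))
                ≤ ∏ ℓ ∈ Finset.range M, Real.exp (-(θ / (θ + (N + 1 + ℓ : ℕ) - 1))) := step1
              _ = Real.exp (∑ ℓ ∈ Finset.range M, -(θ / (θ + (N + 1 + ℓ : ℕ) - 1))) :=
                  (Real.exp_sum _ _).symm
              _ ≤ Real.exp (-(θ / (θ + N)) * ∑ i ∈ Finset.range M, (1 / (i + 1) : ℝ)) := by
                  apply Real.exp_le_exp.2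
                  rw [Finset.sum_neg_distrib, neg_mul]
                  exact neg_le_neg hchain
    have htend : Tendsto (fun M => ENNReal.ofReal
        (Real.exp (-(θ / (θ + N)) * ∑ i ∈ Finset.range M, (1 / (i + 1) : ℝ)))) atTop (𝓝 0) := by
      rw [← ENNReal.ofReal_zero]
      apply ENNReal.tendsto_ofReal
      have hNθ : (0:ℝ) < θ / (θ + N) := div_pos hθ (by linarith)
      have h1 : Tendsto (fun M => (θ / (θ + N)) * ∑ i ∈ Finset.range M, (1 / (i + 1) : ℝ))
          atTop atTop :=
        (tendsto_const_mul_atTop_of_pos hNθ).2 Real.tendsto_sum_range_one_div_nat_succ_atTop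
      have h2 : Tendsto (fun M => -(θ / (θ + N)) * ∑ i ∈ Finset.range M, (1 / (i + 1) : ℝ))
          atTop atBot := by
        simp only [neg_mul]
        exact tendsto_neg_atBot_iff.2 h1
      exact Real.tendsto_exp_atBot.comp h2
    have hle : μ Bad2 ≤ 0 := ge_of_tendsto' htend key
    exact le_antisymm hle (zero_le)
  -- main decomposition
  set Jm := min j N with hJmdef
  set G : ℕ → ℕ := fun m => N + (j + 1 - m) with hGdef
  set Fm : ℕ → Set Ω := fun m =>
    ⋂ i ∈ Finset.Icc (N - m + 1) N, ξ i ⁻¹' {decide (i = N - m + 1)} with hFmdef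
  set E : ℕ → Set Ω := fun m => Fm m ∩ ξ (G m) ⁻¹' {true} with hEdef
  have hincl : {ω | J ω + K ω = j + 1} ⊆
      (ξ 1 ⁻¹' {false} ∪ Bad2) ∪ ⋃ m ∈ Finset.Icc 1 Jm, E m := by
    intro ω hω
    have hω' : J ω + K ω = j + 1 := hω
    by_cases h1 : ξ 1 ω = false
    · exact Or.inl (Or.inl h1)
    by_cases h2 : ω ∈ Bad2
    · exact Or.inl (Or.inr h2)
    right
    have h1' : ξ 1 ω = true := by revert h1; cases (ξ 1 ω) <;> simp
    have hJmem : 1 ≤ J ω ∧ ξ (N - J ω + 1) ω = true := by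
      rw [hJ ω]
      apply Nat.sInf_mem (s := {k : ℕ | 1 ≤ k ∧ ξ (N - k + 1) ω = true})
      refine ⟨N, hN, ?_⟩
      have : N - N + 1 = 1 := by omega
      rw [this]; exact h1'
    have hJle : J ω ≤ N := by
      rw [hJ ω]
      apply Nat.sInf_le
      refine ⟨hN, ?_⟩
      have : N - N + 1 = 1 := by omega
      rw [this]; exact h1'
    have hKmem : 1 ≤ K ω ∧ ξ (N + K ω) ω = true := by
      rw [hK ω]
      apply Nat.sInf_mem (s := {k : ℕ | 1 ≤ k ∧ ξ (N + k) ω = true})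
      by_contra hc
      apply h2
      intro ℓ hℓ
      rw [Set.not_nonempty_iff_eq_empty, Set.eq_empty_iff_forall_notMem] at hc
      have := hc ℓ
      simp only [Set.mem_setOf_eq, not_and] at this
      have h3 := this hℓ
      revert h3; cases (ξ (N + ℓ) ω) <;> simp
    have hm1 : 1 ≤ J ω := hJmem.1
    have hmj : J ω ≤ j := by omega
    refine Set.mem_iUnion₂.2 ⟨J ω, Finset.mem_Icc.2 ⟨hm1, le_min hmj hJle⟩, ?_⟩
    constructor
    · -- ω ∈ Fm (J ω)
      simp only [hFmdef, Set.mem_iInter, Set.mem_preimage, Set.mem_singleton_iff]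
      intro i hi
      rw [Finset.mem_Icc] at hi
      by_cases hieq : i = N - J ω + 1
      · rw [hieq, decide_eq_true (by rfl)]
        exact hJmem.2
      · rw [decide_eq_false hieq]
        have hk1 : 1 ≤ N + 1 - i := by omega
        have hklt : N + 1 - i < J ω := by omega
        have hknot : (N + 1 - i) ∉ {k : ℕ | 1 ≤ k ∧ ξ (N - k + 1) ω = true} := by
          apply Nat.notMem_of_lt_sInf
          rw [← hJ ω]; exact hklt
        have hnt : ¬ ξ (N - (N + 1 - i) + 1) ω = true := fun h => hknot ⟨hk1, h⟩
        have hidx : N - (N + 1 - i) + 1 = i := by omega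
        rw [hidx] at hnt
        revert hnt; cases (ξ i ω) <;> simp
    · -- ω ∈ ξ (G (J ω)) ⁻¹' {true}
      have hKval : K ω = j + 1 - J ω := by omega
      have : G (J ω) = N + K ω := by simp only [hGdef]; omega
      rw [Set.mem_preimage, this, Set.mem_singleton_iff]
      exact hKmem.2
  -- measurability of Fm
  have hFmeas : ∀ m, MeasurableSet (Fm m) := fun m =>
    Finset.measurableSet_biInter _ (fun i _ => (measurableSet_singleton _).preimage (hmeas i))
  -- per-piece bound
  have hEm : ∀ m ∈ Finset.Icc 1 Jm, μ (E m) ≤ ENNReal.ofReal (θ / N) * μ (Fm m) := by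
    intro m hm
    rw [Finset.mem_Icc] at hm
    have hmN : m ≤ N := le_trans hm.2 (min_le_right _ _)
    have hmj : m ≤ j := le_trans hm.2 (min_le_left _ _)
    have hGgt : N < G m := by simp only [hGdef]; omega
    set b : ℕ → Bool := fun i => decide (i = N - m + 1 ∨ i = G m) with hb
    have hnm : G m ∉ Finset.Icc (N - m + 1) N := by
      rw [Finset.mem_Icc]; omega
    have hEeq : E m = ⋂ i ∈ insert (G m) (Finset.Icc (N - m + 1) N), ξ i ⁻¹' {b i} := by
      ext ω
      simp only [hEdef, hFmdef, Set.mem_inter_iff, Set.mem_iInter, Set.mem_preimage,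
        Set.mem_singleton_iff, Finset.mem_insert, Finset.mem_Icc]
      constructor
      · rintro ⟨hF, hG⟩ i hi
        rcases hi with rfl | hi
        · have hbt : b (G m) = true := by simp [hb]
          rw [hbt]
          exact hG
        · have hne : i ≠ G m := by omega
          have hbt : b i = decide (i = N - m + 1) := by
            rw [hb]; simp [hne]
          rw [hbt]
          exact hF i hi
      · intro h
        constructor
        · intro i hi1
          have hne : i ≠ G m := by omega
          have h2 := h i (Or.inr hi1)
          rw [hb] at h2
          simp only [hne, or_false] at h2
          exact h2
        · have h2 := h (G m) (Or.inl rfl)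
          rw [hb] at h2
          simpa using h2
    have hmu : μ (E m) = μ (ξ (G m) ⁻¹' {true}) * μ (Fm m) := by
      rw [hEeq, hprod _ b, Finset.prod_insert hnm]
      congr 1
      · have hbt : b (G m) = true := by simp [hb]
        rw [hbt]
      · rw [show μ (Fm m) = ∏ i ∈ Finset.Icc (N - m + 1) N,
            μ (ξ i ⁻¹' {decide (i = N - m + 1)}) from hprod _ _]
        refine Finset.prod_congr rfl fun i hi => ?_
        rw [Finset.mem_Icc] at hi
        have hne : i ≠ G m := by omega
        have hbt : b i = decide (i = N - m + 1) := by rw [hb]; simp [hne]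
        rw [hbt]
    have hG1 : μ (ξ (G m) ⁻¹' {true}) ≤ ENNReal.ofReal (θ / N) := by
      rw [htrue (G m) (by omega)]
      apply ENNReal.ofReal_le_ofReal
      have hGN : (N:ℝ) + 1 ≤ (G m : ℕ) := by exact_mod_cast hGgt
      have hNpos : (0:ℝ) < N := by linarith
      rw [div_le_div_iff₀ (hcast _ (by omega)) hNpos]
      nlinarith [mul_nonneg hθ.le (by linarith : (0:ℝ) ≤ θ + (G m : ℕ) - 1 - N)]
    calc μ (E m) = μ (ξ (G m) ⁻¹' {true}) * μ (Fm m) := hmu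
      _ ≤ ENNReal.ofReal (θ / N) * μ (Fm m) := mul_le_mul_left hG1 _
  -- disjointness
  have hdisj : (↑(Finset.Icc 1 Jm) : Set ℕ).PairwiseDisjoint Fm := by
    have key : ∀ a c : ℕ, 1 ≤ a → a < c → c ≤ N → Disjoint (Fm a) (Fm c) := by
      intro a c h1 hlt hcN
      rw [Set.disjoint_left]
      intro ω hωa hωc
      simp only [hFmdef, Set.mem_iInter, Set.mem_preimage, Set.mem_singleton_iff,
        Finset.mem_Icc] at hωa hωc
      have hA : ξ (N - a + 1) ω = decide (N - a + 1 = N - a + 1) :=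
        hωa _ ⟨le_refl _, by omega⟩
      have hB : ξ (N - a + 1) ω = decide (N - a + 1 = N - c + 1) :=
        hωc _ ⟨by omega, by omega⟩
      rw [decide_eq_true rfl] at hA
      rw [decide_eq_false (by omega : ¬ (N - a + 1 = N - c + 1))] at hB
      simp [hA] at hB
    intro m hm m' hm' hne
    simp only [Finset.coe_Icc, Set.mem_Icc] at hm hm'
    rcases lt_or_gt_of_ne hne with h | h
    · exact key m m' hm.1 h (le_trans hm'.2 (min_le_right _ _))
    · exact (key m' m hm'.1 h (le_trans hm.2 (min_le_right _ _))).symm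
  have hsum1 : ∑ m ∈ Finset.Icc 1 Jm, μ (Fm m) ≤ 1 := by
    rw [← measure_biUnion_finset hdisj (fun m _ => hFmeas m)]
    exact prob_le_one
  calc μ {ω | J ω + K ω = j + 1}
      ≤ μ ((ξ 1 ⁻¹' {false} ∪ Bad2) ∪ ⋃ m ∈ Finset.Icc 1 Jm, E m) := measure_mono hincl
    _ ≤ μ (ξ 1 ⁻¹' {false} ∪ Bad2) + μ (⋃ m ∈ Finset.Icc 1 Jm, E m) := measure_union_le _ _
    _ ≤ (μ (ξ 1 ⁻¹' {false}) + μ Bad2) + μ (⋃ m ∈ Finset.Icc 1 Jm, E m) :=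
        add_le_add_left (measure_union_le _ _) _
    _ = μ (⋃ m ∈ Finset.Icc 1 Jm, E m) := by rw [hBad1, hBad2]; simp
    _ ≤ ∑ m ∈ Finset.Icc 1 Jm, μ (E m) := measure_biUnion_finset_le _ _
    _ ≤ ∑ m ∈ Finset.Icc 1 Jm, ENNReal.ofReal (θ / N) * μ (Fm m) := Finset.sum_le_sum hEm
    _ = ENNReal.ofReal (θ / N) * ∑ m ∈ Finset.Icc 1 Jm, μ (Fm m) := (Finset.mul_sum _ _ _).symm
    _ ≤ ENNReal.ofReal (θ / N) * 1 := mul_le_mul_right hsum1 _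
    _ = ENNReal.ofReal (θ / N) := mul_one _
end

section
/- Let θ > 0 and let (u_j)_{j≥1} be real numbers with Σ_{j=1}^∞ u_j²/j < ∞. Let (W_j)_{j≥1} be independent Poisson random variables with means θ/j, and set H_N = Σ_{j=1}^N u_j W_j. Then the characteristic function of H_N − E[H_N] converges pointwise, uniformly on compact sets, to φ(t) = exp(Σ_{j=1}^∞ (θ/j)(e^{i t u_j} − i t u_j − 1)); in particular H_N − E[H_N] converges in distribution to the infinitely divisible law with this characteristic function. -/
open MeasureTheory ProbabilityTheory Finset Complex

/-- Product of integrals for independent complex random variables. -/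
lemma aux_indep_mul {Ω : Type*} [MeasurableSpace Ω] {μ : Measure Ω} [IsProbabilityMeasure μ]
    {X Y : Ω → ℂ} (h : IndepFun X Y μ) (hX : Measurable X) (hY : Measurable Y) :
    ∫ ω, X ω * Y ω ∂μ = (∫ ω, X ω ∂μ) * ∫ ω, Y ω ∂μ := by
  rw [ProbabilityTheory.indepFun_iff_map_prod_eq_prod_map_map hX.aemeasurable hY.aemeasurable] at h
  haveI : IsProbabilityMeasure (μ.map X) := Measure.isProbabilityMeasure_map hX.aemeasurable
  haveI : IsProbabilityMeasure (μ.map Y) := Measure.isProbabilityMeasure_map hY.aemeasurable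
  have h1 : ∫ ω, X ω * Y ω ∂μ = ∫ p : ℂ × ℂ, p.1 * p.2 ∂(μ.map (fun ω => (X ω, Y ω))) := by
    rw [integral_map (f := fun p : ℂ × ℂ => p.1 * p.2) (hX.prodMk hY).aemeasurable
      (measurable_fst.mul measurable_snd).aestronglyMeasurable]
  rw [h1, h]
  have h2 := MeasureTheory.integral_prod_mul (μ := μ.map X) (ν := μ.map Y)
    (fun x : ℂ => x) (fun y : ℂ => y)
  refine h2.trans ?_
  rw [show (∫ x : ℂ, x ∂(μ.map X)) = ∫ ω, X ω ∂μ from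
      integral_map hX.aemeasurable aestronglyMeasurable_id,
    show (∫ y : ℂ, y ∂(μ.map Y)) = ∫ ω, Y ω ∂μ from
      integral_map hY.aemeasurable aestronglyMeasurable_id]

/-- The formula `E[c^X] = exp (λ (c - 1))` for a Poisson variable. -/
lemma aux_poisson {Ω : Type*} [MeasurableSpace Ω] {μ : Measure Ω} [IsProbabilityMeasure μ]
    {lam : ℝ} (hlam : 0 ≤ lam) {X : Ω → ℕ} (hX : Measurable X)
    (hpmf : ∀ k : ℕ, μ {ω | X ω = k} =
      ENNReal.ofReal (Real.exp (-lam) * lam ^ k / (Nat.factorial k)))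
    {c : ℂ} (hc : ‖c‖ ≤ 1) :
    ∫ ω, c ^ X ω ∂μ = Complex.exp (lam * (c - 1)) := by
  haveI : IsProbabilityMeasure (μ.map X) := Measure.isProbabilityMeasure_map hX.aemeasurable
  have h0 : ∫ ω, c ^ X ω ∂μ = ∫ n, c ^ n ∂(μ.map X) :=
    (integral_map hX.aemeasurable measurable_from_nat.aestronglyMeasurable).symm
  have hint : Integrable (fun n : ℕ => c ^ n) (μ.map X) := by
    refine (integrable_const (1 : ℝ)).mono' measurable_from_nat.aestronglyMeasurable ?_
    refine Filter.Eventually.of_forall fun n => ?_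
    rw [norm_pow]
    exact pow_le_one₀ (norm_nonneg _) hc
  rw [h0, integral_countable' hint]
  have hsing : ∀ n : ℕ, ((μ.map X) {n}).toReal
      = Real.exp (-lam) * lam ^ n / (Nat.factorial n) := by
    intro n
    rw [Measure.map_apply hX (measurableSet_singleton n)]
    have hpre : X ⁻¹' {n} = {ω | X ω = n} := rfl
    rw [hpre, hpmf n, ENNReal.toReal_ofReal (by positivity)]
  have hterm : ∀ n : ℕ, ((μ.map X) {n}).toReal • c ^ n
      = (Real.exp (-lam) : ℂ) * (((lam : ℂ) * c) ^ n / (Nat.factorial n)) := by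
    intro n
    rw [hsing n, Complex.real_smul, mul_pow]
    push_cast
    ring
  simp only [Measure.real]
  rw [tsum_congr hterm, tsum_mul_left]
  have hexp : Complex.exp ((lam : ℂ) * c) = ∑' n : ℕ, ((lam : ℂ) * c) ^ n / (Nat.factorial n) := by
    rw [Complex.exp_eq_exp_ℂ, NormedSpace.exp_eq_tsum_div]
  rw [← hexp, Complex.ofReal_exp, ← Complex.exp_add]
  congr 1
  push_cast
  ring

/-- The bound `‖e^{ix} - ix - 1‖ ≤ 3 x ^ 2`. -/
lemma aux_bound (x : ℝ) :
    ‖Complex.exp (Complex.I * x) - Complex.I * x - 1‖ ≤ 3 * x ^ 2 := by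
  rcases le_or_gt |x| 1 with h | h
  · have habs : ‖Complex.I * x‖ ≤ 1 := by
      rwa [norm_mul, Complex.norm_I, one_mul, Complex.norm_real, Real.norm_eq_abs]
    have hb := Complex.exp_bound habs (n := 2) (by norm_num)
    have hsum : ∑ m ∈ Finset.range 2, (Complex.I * x) ^ m / (Nat.factorial m)
        = 1 + Complex.I * x := by
      simp [Finset.sum_range_succ]
    rw [hsum] at hb
    norm_num [Nat.factorial] at hb
    have heq : Complex.exp (Complex.I * x) - Complex.I * x - 1
        = Complex.exp (Complex.I * x) - (1 + Complex.I * x) := by ring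
    have habs2 : ‖Complex.I * x‖ ^ 2 = x ^ 2 := by
      rw [norm_mul, Complex.norm_I, one_mul, Complex.norm_real, Real.norm_eq_abs, _root_.sq_abs]
    rw [heq]
    refine hb.trans ?_
    nlinarith [sq_nonneg x]
  · have h1 : ‖Complex.exp (Complex.I * x) - Complex.I * x - 1‖
        ≤ ‖Complex.exp (Complex.I * x)‖ + ‖Complex.I * (x : ℂ)‖ + ‖(1 : ℂ)‖ := by
      refine (norm_sub_le _ _).trans ?_
      gcongr
      exact norm_sub_le _ _
    have h2 : ‖Complex.exp (Complex.I * x)‖ = 1 := by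
      rw [Complex.norm_exp]
      simp
    have h3 : ‖Complex.I * (x : ℂ)‖ = |x| := by
      rw [norm_mul, Complex.norm_I, one_mul,
        Complex.norm_real, Real.norm_eq_abs]
    rw [h2, h3, norm_one] at h1
    refine h1.trans ?_
    nlinarith [_root_.sq_abs x, abs_nonneg x]

/-- Uniform convergence of `exp ∘ partial sums` given a Weierstrass bound. -/
lemma aux_exp_unif {K : Set ℝ} {f : ℕ → ℝ → ℂ} {M : ℕ → ℝ} (hM : Summable M)
    (hb : ∀ j t, t ∈ K → ‖f j t‖ ≤ M j) :
    TendstoUniformlyOn (fun N t => Complex.exp (∑ j ∈ Finset.range N, f j t))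
      (fun t => Complex.exp (∑' j, f j t)) Filter.atTop K := by
  have hM' : Summable fun j => |M j| := hM.abs
  have hb' : ∀ j t, t ∈ K → ‖f j t‖ ≤ |M j| := fun j t ht => (hb j t ht).trans (le_abs_self _)
  set Mtot : ℝ := ∑' j, |M j| with hMtot
  have hnormsum : ∀ t, t ∈ K → Summable fun j => ‖f j t‖ := by
    intro t ht
    exact Summable.of_nonneg_of_le (fun j => norm_nonneg _) (fun j => hb' j t ht) hM'
  have hLb : ∀ t, t ∈ K → ‖∑' j, f j t‖ ≤ Mtot := by
    intro t ht
    refine (norm_tsum_le_tsum_norm (hnormsum t ht)).trans ?_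
    exact Summable.tsum_le_tsum (fun j => hb' j t ht) (hnormsum t ht) hM'
  have hUnif := tendstoUniformlyOn_tsum_nat hM' hb'
  rw [Metric.tendstoUniformlyOn_iff] at hUnif ⊢
  intro ε hε
  have hexp : (0 : ℝ) < Real.exp Mtot := Real.exp_pos _
  set δ : ℝ := min 1 (ε / (2 * Real.exp Mtot + 1)) with hδdef
  have hδpos : 0 < δ := lt_min one_pos (div_pos hε (by positivity))
  filter_upwards [hUnif δ hδpos] with N hN t ht
  have hd := hN t ht
  rw [dist_eq_norm] at hd ⊢
  set A : ℂ := ∑' j, f j t with hA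
  set B : ℂ := ∑ j ∈ Finset.range N, f j t with hB
  have h1 : Complex.exp A - Complex.exp B = Complex.exp A * (1 - Complex.exp (B - A)) := by
    rw [mul_sub, mul_one, ← Complex.exp_add]
    ring_nf
  have hBA : ‖B - A‖ < δ := by rwa [norm_sub_rev] at hd
  have hBA1 : ‖B - A‖ ≤ 1 :=
    le_of_lt (lt_of_lt_of_le hBA (min_le_left _ _))
  have h2 : ‖1 - Complex.exp (B - A)‖ ≤ 2 * ‖B - A‖ := by
    rw [norm_sub_rev]
    exact Complex.norm_exp_sub_one_le hBA1
  have h3 : ‖Complex.exp A‖ ≤ Real.exp Mtot := by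
    rw [Complex.norm_exp]
    exact Real.exp_le_exp.mpr ((Complex.re_le_norm A).trans (hLb t ht))
  calc ‖Complex.exp A - Complex.exp B‖
      = ‖Complex.exp A‖ * ‖1 - Complex.exp (B - A)‖ := by rw [h1, norm_mul]
    _ ≤ Real.exp Mtot * (2 * ‖B - A‖) :=
        mul_le_mul h3 h2 (norm_nonneg _) (le_of_lt hexp)
    _ < ε := by
        have hδ2 : δ ≤ ε / (2 * Real.exp Mtot + 1) := min_le_right _ _
        have h5 : ε / (2 * Real.exp Mtot + 1) * (2 * Real.exp Mtot + 1) = ε :=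
          div_mul_cancel₀ _ (by positivity)
        nlinarith [norm_nonneg (B - A)]

theorem stmt_16 {Ω : Type*} [MeasurableSpace Ω] (μ : Measure Ω) [IsProbabilityMeasure μ]
    (θ : ℝ) (hθ : 0 < θ) (u : ℕ → ℝ)
    (hsum : Summable (fun j : ℕ => u (j + 1) ^ 2 / ((j : ℝ) + 1)))
    (W : ℕ → Ω → ℕ) (hmeas : ∀ j, Measurable (W j))
    (hindep : iIndepFun W μ)
    (hPoisson : ∀ j : ℕ, 1 ≤ j → ∀ k : ℕ,
      μ {ω | W j ω = k} =
        ENNReal.ofReal (Real.exp (-(θ / j)) * (θ / j) ^ k / (Nat.factorial k))) :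
    ∀ K : Set ℝ, IsCompact K →
      TendstoUniformlyOn
        (fun (N : ℕ) (t : ℝ) =>
          ∫ ω, Complex.exp (Complex.I * t *
            (∑ j ∈ Finset.Icc 1 N, u j * ((W j ω : ℝ) - θ / j))) ∂μ)
        (fun t : ℝ => Complex.exp
          (∑' j : ℕ, (θ / ((j : ℝ) + 1)) *
            (Complex.exp (Complex.I * t * u (j + 1)) - Complex.I * t * u (j + 1) - 1)))
        Filter.atTop K := by
  classical
  intro K hK
  obtain ⟨C, hC⟩ := hK.isBounded.subset_closedBall 0
  have htK : ∀ t ∈ K, |t| ≤ C := by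
    intro t ht
    have := hC ht
    rwa [Metric.mem_closedBall, Real.dist_eq, sub_zero] at this
  -- the summand functions
  have hfb : ∀ (j : ℕ) (t : ℝ), t ∈ K →
      ‖((θ / ((j : ℝ) + 1) : ℝ) : ℂ) *
        (Complex.exp (Complex.I * t * u (j + 1)) - Complex.I * t * u (j + 1) - 1)‖
      ≤ (3 * C ^ 2 * θ) * (u (j + 1) ^ 2 / ((j : ℝ) + 1)) := by
    intro j t ht
    have hj1 : (0 : ℝ) < (j : ℝ) + 1 := by positivity
    have hx : Complex.I * (t : ℂ) * (u (j + 1) : ℂ)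
        = Complex.I * ((t * u (j + 1) : ℝ) : ℂ) := by push_cast; ring
    have hb := aux_bound (t * u (j + 1))
    rw [norm_mul, Complex.norm_real, Real.norm_eq_abs,
      _root_.abs_of_nonneg (by positivity : (0 : ℝ) ≤ θ / ((j : ℝ) + 1)), hx]
    have htC : |t| ≤ C := htK t ht
    have ht2 : t ^ 2 ≤ C ^ 2 := by nlinarith [abs_nonneg t, _root_.sq_abs t]
    have h1 : θ / ((j : ℝ) + 1) * ‖Complex.exp (Complex.I * ((t * u (j + 1) : ℝ) : ℂ))
          - Complex.I * ((t * u (j + 1) : ℝ) : ℂ) - 1‖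
        ≤ θ / ((j : ℝ) + 1) * (3 * (t * u (j + 1)) ^ 2) :=
      mul_le_mul_of_nonneg_left hb (by positivity)
    refine h1.trans ?_
    have hu2 : (t * u (j + 1)) ^ 2 ≤ C ^ 2 * u (j + 1) ^ 2 := by
      nlinarith [sq_nonneg (u (j + 1))]
    have h6 : θ * (t * u (j + 1)) ^ 2 ≤ θ * (C ^ 2 * u (j + 1) ^ 2) :=
      mul_le_mul_of_nonneg_left hu2 hθ.le
    have hineq : θ * (3 * (t * u (j + 1)) ^ 2) ≤ 3 * C ^ 2 * θ * u (j + 1) ^ 2 := by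
      nlinarith [h6]
    calc θ / ((j : ℝ) + 1) * (3 * (t * u (j + 1)) ^ 2)
        = θ * (3 * (t * u (j + 1)) ^ 2) / ((j : ℝ) + 1) := by ring
      _ ≤ 3 * C ^ 2 * θ * u (j + 1) ^ 2 / ((j : ℝ) + 1) := by gcongr
      _ = 3 * C ^ 2 * θ * (u (j + 1) ^ 2 / ((j : ℝ) + 1)) := by ring
  have hMsum : Summable (fun j : ℕ => (3 * C ^ 2 * θ) * (u (j + 1) ^ 2 / ((j : ℝ) + 1))) :=
    hsum.mul_left _
  -- per-factor characteristic function of Poisson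
  have hfac : ∀ (j : ℕ), 1 ≤ j → ∀ t : ℝ,
      ∫ ω, Complex.exp (Complex.I * t * ((u j * ((W j ω : ℝ) - θ / j) : ℝ) : ℂ)) ∂μ
        = Complex.exp (((θ / (j : ℝ) : ℝ) : ℂ) *
            (Complex.exp (Complex.I * t * u j) - Complex.I * t * u j - 1)) := by
    intro j hj t
    have hjpos : (0 : ℝ) < (j : ℝ) := by exact_mod_cast hj
    have hlam : (0 : ℝ) ≤ θ / j := by positivity
    set c : ℂ := Complex.exp (Complex.I * t * u j) with hc
    have hcn : ‖c‖ ≤ 1 := by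
      rw [hc, Complex.norm_exp]
      have hre : (Complex.I * t * u j).re = 0 := by simp
      rw [hre, Real.exp_zero]
    have hsplit : ∀ n : ℕ, Complex.exp (Complex.I * t * ((u j * ((n : ℝ) - θ / j) : ℝ) : ℂ))
        = Complex.exp (-(Complex.I * t * u j * ((θ / (j : ℝ) : ℝ) : ℂ))) * c ^ n := by
      intro n
      rw [hc, ← Complex.exp_nat_mul, ← Complex.exp_add]
      congr 1
      push_cast
      ring
    simp only [hsplit]
    rw [MeasureTheory.integral_const_mul]
    rw [aux_poisson hlam (hmeas j) (hPoisson j hj) hcn]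
    rw [← Complex.exp_add]
    congr 1
    push_cast
    ring
  -- product over finsets via independence
  have hprod : ∀ (g : ℕ → ℕ → ℂ) (s : Finset ℕ),
      ∫ ω, ∏ j ∈ s, g j (W j ω) ∂μ = ∏ j ∈ s, ∫ ω, g j (W j ω) ∂μ := by
    intro g s
    induction s using Finset.induction_on with
    | empty => simp
    | @insert i s his ih =>
      have hgW : iIndepFun (fun j => g j ∘ W j) μ :=
        hindep.comp _ (fun j => measurable_from_nat)
      have hindep2 := hgW.indepFun_finset_prod_of_notMem
        (fun j => measurable_from_nat.comp (hmeas j)) his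
      have heqfun : (∏ j ∈ s, (g j ∘ W j)) = fun ω => ∏ j ∈ s, g j (W j ω) := by
        funext ω
        simp [Finset.prod_apply]
      rw [heqfun] at hindep2
      have hmul := aux_indep_mul (X := fun ω => g i (W i ω))
        (Y := fun ω => ∏ j ∈ s, g j (W j ω)) hindep2.symm
        (measurable_from_nat.comp (hmeas i))
        (Finset.measurable_prod s fun j _ => measurable_from_nat.comp (hmeas j))
      simp only [Finset.prod_insert his]
      rw [hmul, ih]
  -- the partial characteristic function equals exp of a partial sum
  have hEq : ∀ (N : ℕ) (t : ℝ),
      ∫ ω, Complex.exp (Complex.I * t *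
          ((∑ j ∈ Finset.Icc 1 N, u j * ((W j ω : ℝ) - θ / j) : ℝ) : ℂ)) ∂μ
        = Complex.exp (∑ j ∈ Finset.range N,
            ((θ / ((j : ℝ) + 1) : ℝ) : ℂ) *
              (Complex.exp (Complex.I * t * u (j + 1)) - Complex.I * t * u (j + 1) - 1)) := by
    intro N t
    have hsplit : ∀ ω : Ω, Complex.exp (Complex.I * t *
          ((∑ j ∈ Finset.Icc 1 N, u j * ((W j ω : ℝ) - θ / j) : ℝ) : ℂ))
        = ∏ j ∈ Finset.Icc 1 N,
            Complex.exp (Complex.I * t * ((u j * ((W j ω : ℝ) - θ / j) : ℝ) : ℂ)) := by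
      intro ω
      rw [← Complex.exp_sum]
      congr 1
      push_cast
      rw [Finset.mul_sum]
    simp only [hsplit]
    refine ((hprod (fun j n => Complex.exp (Complex.I * t * ((u j * ((n : ℝ) - θ / j) : ℝ) : ℂ)))
      (Finset.Icc 1 N)).trans ?_)
    rw [Finset.prod_congr rfl (fun j hj => hfac j (Finset.mem_Icc.mp hj).1 t),
      ← Complex.exp_sum]
    congr 1
    rw [← Finset.Ico_add_one_right_eq_Icc, Finset.sum_Ico_eq_sum_range]
    try simp only [Nat.add_sub_cancel]
    refine Finset.sum_congr rfl fun i hi => ?_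
    rw [Nat.add_comm 1 i]
    push_cast
    ring
  -- conclude
  refine TendstoUniformlyOn.congr ?_
    (Filter.Eventually.of_forall fun N t ht => (hEq N t).symm)
  have hfun : (fun t : ℝ => Complex.exp (∑' j : ℕ,
      ((θ / ((j : ℝ) + 1) : ℝ) : ℂ) *
        (Complex.exp (Complex.I * t * u (j + 1)) - Complex.I * t * u (j + 1) - 1)))
      = (fun t : ℝ => Complex.exp
          (∑' j : ℕ, (θ / ((j : ℝ) + 1)) *
            (Complex.exp (Complex.I * t * u (j + 1)) - Complex.I * t * u (j + 1) - 1))) := by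
    funext t
    congr 1
    refine tsum_congr fun j => ?_
    push_cast
    ring
  rw [← hfun]
  exact aux_exp_unif hMsum hfb
end
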